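/- There exist constants C₀ ≥ 1 and C > 0 such that the following holds. Let N₁, N₂ ∈ 2^ℕ with N₁ ≥ C₀ N₂, and let u₀, v₀ : 𝕋 → ℂ satisfy supp(û₀) ⊆ {k ∈ ℤ : N₁/2 ≤ |k| ≤ 2N₁} and supp(v̂₀) ⊆ {k ∈ ℤ : N₂/2 ≤ |k| ≤ 2N₂}. Then ‖ e^{itΔ}u₀ · e^{itΔ}v₀ ‖_{L²([0,N₁^{-1}]×𝕋)} ≤ C N₁^{-1/2} ‖u₀‖_{L²(𝕋)} ‖v₀‖_{L²(𝕋)}. -/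

import Mathlib

open MeasureTheory Real

noncomputable section

/-- Periodic Schrödinger evolution on `𝕋 = ℝ/(2πℤ)` of the function with
Fourier coefficients `a`. -/
def evol (a : ℤ → ℂ) (t x : ℝ) : ℂ :=
  ∑' k : ℤ, a k * Complex.exp (Complex.I * (((k : ℝ) * x - t * (k : ℝ) ^ 2 : ℝ) : ℂ))

/-- Square of the `L²(𝕋)` norm of the function with Fourier coefficients `a`. -/
def l2nsq (a : ℤ → ℂ) : ℝ :=
  ∫ x in Set.Ioc (0 : ℝ) (2 * π), ‖evol a 0 x‖ ^ 2

section Aux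
open Complex Finset

lemma orth (n : ℤ) : (∫ x in (0:ℝ)..(2*π), Complex.exp (Complex.I * n * x)) =
    if n = 0 then (2*π:ℂ) else 0 := by
  rcases eq_or_ne n 0 with h | h
  · simp [h]
  · have hc : Complex.I * n ≠ 0 := by
      simp [Complex.I_ne_zero, Complex.ext_iff]
      exact_mod_cast h
    rw [if_neg h]
    rw [integral_exp_mul_complex (a := (0:ℝ)) (b := 2*π) hc]
    have h1 : Complex.I * n * (2*π:ℝ) = n * (2*π*Complex.I) := by push_cast; ring
    rw [h1, Complex.exp_int_mul_two_pi_mul_I]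
    simp

set_option maxHeartbeats 1000000 in

lemma xParseval {ι : Type*} [DecidableEq ι] (s : Finset ι) (n : ι → ℤ) (c : ι → ℂ) :
    (∫ x in (0:ℝ)..(2*π), ‖∑ i ∈ s, c i * Complex.exp (Complex.I * (n i) * x)‖^2)
    = 2*π * (∑ i ∈ s, ∑ j ∈ s,
        if n i = n j then (c i * (starRingEnd ℂ) (c j)).re else 0) := by
  have key : ∀ x : ℝ, (‖∑ i ∈ s, c i * Complex.exp (Complex.I * (n i) * x)‖^2 : ℝ)
      = (∑ i ∈ s, ∑ j ∈ s,
          (c i * (starRingEnd ℂ) (c j)) * Complex.exp (Complex.I * ((n i : ℤ) - n j) * x)).re := by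
    intro x
    have hz : ∀ z : ℂ, (‖z‖^2 : ℝ) = (z * (starRingEnd ℂ) z).re := by
      intro z
      rw [Complex.mul_conj]
      simp [Complex.normSq_eq_norm_sq, ← Complex.ofReal_pow]
    rw [hz]
    congr 1
    rw [map_sum, Finset.sum_mul_sum]
    refine Finset.sum_congr rfl fun i _ => Finset.sum_congr rfl fun j _ => ?_
    rw [map_mul, ← Complex.exp_conj]
    have hc : (starRingEnd ℂ) (Complex.I * (n j) * x) = -(Complex.I * (n j) * x) := by
      simp [Complex.ext_iff]
    rw [hc, mul_mul_mul_comm, ← Complex.exp_add]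
    push_cast
    ring_nf
  simp_rw [key]
  have hint : ∀ (i j : ι), IntervalIntegrable
      (fun x : ℝ => (c i * (starRingEnd ℂ) (c j)) * Complex.exp (Complex.I * ((n i : ℤ) - n j) * x))
      volume 0 (2*π) := by
    intro i j
    exact (continuous_const.mul (Complex.continuous_exp.comp (by fun_prop))).intervalIntegrable _ _
  have hsum : IntervalIntegrable
      (fun x : ℝ => ∑ i ∈ s, ∑ j ∈ s,
        (c i * (starRingEnd ℂ) (c j)) * Complex.exp (Complex.I * ((n i : ℤ) - n j) * x))
      volume 0 (2*π) := by
    apply Continuous.intervalIntegrable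
    apply continuous_finset_sum
    intro i _
    apply continuous_finset_sum
    intro j _
    fun_prop
  have hre := Complex.reCLM.intervalIntegral_comp_comm hsum
  simp only [Complex.reCLM_apply] at hre
  rw [hre]
  rw [intervalIntegral.integral_finset_sum (fun i _ => by
    apply Continuous.intervalIntegrable
    apply continuous_finset_sum
    intro j _
    fun_prop)]
  simp_rw [intervalIntegral.integral_finset_sum (fun j _ => hint _ _),
    intervalIntegral.integral_const_mul]
  have horth : ∀ i j, (∫ x in (0:ℝ)..(2*π), Complex.exp (Complex.I * ((n i : ℤ) - n j) * x))
      = if n i = n j then (2*π:ℂ) else 0 := by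
    intro i j
    have := orth (n i - n j)
    push_cast at this ⊢
    rw [this]
    simp [sub_eq_zero]
  simp_rw [horth]
  rw [Complex.re_sum, Finset.mul_sum]
  refine Finset.sum_congr rfl fun i _ => ?_
  rw [Complex.re_sum, Finset.mul_sum]
  refine Finset.sum_congr rfl fun j _ => ?_
  split_ifs with h
  · simp [mul_comm]
  · simp

lemma gauss_eq (T : ℝ) (hT : 0 < T) (μ : ℝ) (t : ℝ) :
    (Real.exp (-(t/T)^2) : ℂ) * Complex.exp (-(Complex.I * μ * t))
    = Complex.exp (-(1/T^2 : ℂ) * t^2 + (-(Complex.I * μ)) * t + 0) := by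
  rw [Complex.ofReal_exp, ← Complex.exp_add]
  congr 1
  have : ((-(t/T)^2 : ℝ) : ℂ) = -(1/T^2 : ℂ) * (t:ℂ)^2 := by
    push_cast
    field_simp
  rw [this]
  ring

lemma gaussIntegrable (T : ℝ) (hT : 0 < T) (μ : ℝ) :
    Integrable (fun t : ℝ => (Real.exp (-(t/T)^2) : ℂ) * Complex.exp (-(Complex.I * μ * t))) := by
  have hb : (0:ℝ) < ((1/T^2 : ℂ)).re := by
    simp only [← Complex.ofReal_pow, ← Complex.ofReal_one, ← Complex.ofReal_div,
      Complex.ofReal_re]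
    positivity
  have := integrable_cexp_quadratic hb (-(Complex.I * μ)) 0
  refine this.congr ?_
  refine Filter.EventuallyEq.symm (Filter.Eventually.of_forall fun t => ?_)
  exact gauss_eq T hT μ t

lemma gaussBound (T : ℝ) (hT : 0 < T) (μ : ℝ) :
    ‖∫ t : ℝ, (Real.exp (-(t/T)^2) : ℂ) * Complex.exp (-(Complex.I * μ * t))‖
    ≤ 2*T * Real.exp (-(T*μ)^2/4) := by
  have hb : (0:ℝ) < ((1/T^2 : ℂ)).re := by
    simp only [← Complex.ofReal_pow, ← Complex.ofReal_one, ← Complex.ofReal_div,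
      Complex.ofReal_re]
    positivity
  have key := fourierIntegral_gaussian hb (-(μ:ℂ))
  have heq : (∫ t : ℝ, (Real.exp (-(t/T)^2) : ℂ) * Complex.exp (-(Complex.I * μ * t)))
      = ∫ x : ℝ, Complex.exp (Complex.I * (-(μ:ℂ)) * x) * Complex.exp (-(1/T^2 : ℂ) * x^2) := by
    congr 1
    funext t
    rw [gauss_eq T hT μ t, ← Complex.exp_add]
    congr 1
    ring
  rw [heq, key]
  rw [norm_mul]
  have h1 : (π / (1/T^2 : ℂ)) = ((π * T^2 : ℝ) : ℂ) := by
    push_cast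
    field_simp
  rw [h1]
  have h2 : ((π * T^2 : ℝ) : ℂ) ^ (1/2 : ℂ) = ((((π * T^2 : ℝ)) ^ (1/2 : ℝ) : ℝ) : ℂ) := by
    rw [Complex.ofReal_cpow (by positivity)]
    norm_num
  rw [h2]
  have h3 : (-(-(μ:ℂ)) ^ 2 / (4 * (1/T^2 : ℂ))) = ((-(T*μ)^2/4 : ℝ) : ℂ) := by
    push_cast
    field_simp
  rw [h3, Complex.norm_real, ← Complex.ofReal_exp, Complex.norm_real]
  rw [Real.norm_of_nonneg (by positivity), Real.norm_of_nonneg (by positivity)]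
  have h4 : (π * T^2) ^ (1/2 : ℝ) ≤ 2*T := by
    have : (π * T^2) ^ (1/2 : ℝ) ≤ (4 * T^2) ^ (1/2 : ℝ) := by
      apply Real.rpow_le_rpow (by positivity) ?_ (by norm_num)
      nlinarith [Real.pi_le_four, sq_nonneg T]
    refine this.trans_eq ?_
    have h5 : (4 * T^2) = (2*T)^2 := by ring
    rw [h5, ← Real.rpow_natCast (2*T) 2, ← Real.rpow_mul (by positivity)]
    norm_num
  exact mul_le_mul_of_nonneg_right h4 (Real.exp_nonneg _)

lemma geomAbs (s : Finset ℤ) : ∑ d ∈ s, Real.exp (-((d:ℝ))^2/16) ≤ 34 := by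
  set r : ℝ := Real.exp (-(1/16 : ℝ)) with hr
  have hr0 : 0 ≤ r := Real.exp_nonneg _
  have hr1 : r < 1 := by
    rw [hr, Real.exp_lt_one_iff]
    norm_num
  have hterm : ∀ d : ℤ, Real.exp (-((d:ℝ))^2/16) ≤ r ^ d.natAbs := by
    intro d
    rw [hr, ← Real.exp_nat_mul]
    apply Real.exp_le_exp.mpr
    rcases eq_or_ne d 0 with h | h
    · simp [h]
    · have h1 : (1:ℝ) ≤ |(d:ℝ)| := by
        rw [← Int.cast_abs]
        exact_mod_cast Int.one_le_abs h
      have h2 : (d.natAbs : ℝ) = |(d:ℝ)| := by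
        simp [Nat.cast_natAbs]
      rw [h2]
      nlinarith [_root_.sq_abs (d:ℝ), abs_nonneg (d:ℝ)]
  have hsub : ∀ s' : Finset ℤ, (∀ x ∈ s', ∀ y ∈ s', x.natAbs = y.natAbs → x = y) →
      ∑ d ∈ s', r ^ d.natAbs ≤ (1 - r)⁻¹ := by
    intro s' hinj
    rw [← Finset.sum_image hinj]
    refine (Summable.sum_le_tsum _ (fun n _ => pow_nonneg hr0 n)
      (summable_geometric_of_lt_one hr0 hr1)).trans ?_
    rw [tsum_geometric_of_lt_one hr0 hr1]
  have hinv : (1 - r)⁻¹ ≤ 17 := by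
    have h16 : (17:ℝ)/16 ≤ Real.exp (1/16 : ℝ) := by
      have := Real.add_one_le_exp (1/16 : ℝ)
      linarith
    have hrle : r ≤ 16/17 := by
      rw [hr, Real.exp_neg]
      rw [inv_le_comm₀ (Real.exp_pos _) (by norm_num)]
      linarith
    have : (1:ℝ)/17 ≤ 1 - r := by linarith
    rw [inv_le_comm₀ (by linarith) (by norm_num)]
    linarith
  calc ∑ d ∈ s, Real.exp (-((d:ℝ))^2/16)
      ≤ ∑ d ∈ s, r ^ d.natAbs := Finset.sum_le_sum (fun d _ => hterm d)
    _ = ∑ d ∈ s.filter (fun d => 0 ≤ d), r ^ d.natAbs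
        + ∑ d ∈ s.filter (fun d => ¬ 0 ≤ d), r ^ d.natAbs :=
        (Finset.sum_filter_add_sum_filter_not s _ _).symm
    _ ≤ (1 - r)⁻¹ + (1 - r)⁻¹ := by
        refine add_le_add (hsub _ ?_) (hsub _ ?_)
        · intro x hx y hy hxy
          simp only [Finset.mem_filter] at hx hy
          omega
        · intro x hx y hy hxy
          simp only [Finset.mem_filter] at hx hy
          omega
    _ ≤ 17 + 17 := by linarith
    _ = 34 := by norm_num

lemma schurRow (N₁ N₂ : ℝ) (hN₁ : 0 < N₁) (hN₂0 : 0 ≤ N₂) (hN : 16*N₂ ≤ N₁) (s₁ s₂ : Finset ℤ)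
    (hb₁ : ∀ k ∈ s₁, N₁/2 ≤ |(k:ℝ)| ∧ |(k:ℝ)| ≤ 2*N₁)
    (hb₂ : ∀ k ∈ s₂, |(k:ℝ)| ≤ 2*N₂)
    (p : ℤ×ℤ) (hp : p ∈ s₁ ×ˢ s₂) :
    ∑ q ∈ s₁ ×ˢ s₂, (if p.1+p.2 = q.1+q.2 then
        Real.exp (-((1/N₁)*(((p.1^2+p.2^2) - (q.1^2+q.2^2) :ℤ):ℝ))^2/4) else 0) ≤ 34 := by
  classical
  rw [← Finset.sum_filter]
  set F := (s₁ ×ˢ s₂).filter (fun q => p.1+p.2 = q.1+q.2) with hF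
  obtain ⟨k₁, k₂⟩ := p
  simp only [Finset.mem_product] at hp
  obtain ⟨hk₁, hk₂⟩ := hp
  have step : ∀ q ∈ F, Real.exp (-((1/N₁)*((((k₁^2+k₂^2) - (q.1^2+q.2^2)) :ℤ):ℝ))^2/4)
      ≤ Real.exp (-(((q.2 - k₂ :ℤ):ℝ))^2/16) := by
    rintro ⟨l₁, l₂⟩ hq
    simp only [hF, Finset.mem_filter, Finset.mem_product] at hq
    obtain ⟨⟨hl₁, hl₂⟩, hsum⟩ := hq
    simp only at hsum hl₁ hl₂ ⊢
    apply Real.exp_le_exp.mpr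
    have hl₁eq : l₁ = k₁ + k₂ - l₂ := by omega
    subst hl₁eq
    have hfac : ((k₁^2+k₂^2) - ((k₁ + k₂ - l₂)^2+l₂^2) :ℤ) = (l₂ - k₂) * ((k₁ + (k₁ + k₂ - l₂)) - (k₂ + l₂)) := by ring
    rw [hfac]
    push_cast
    set d : ℝ := (l₂:ℝ) - k₂ with hd
    set S : ℝ := ((k₁:ℝ) + ((k₁:ℝ) + k₂ - l₂)) - ((k₂:ℝ) + l₂) with hS
    obtain ⟨hk₁lo, hk₁hi⟩ := hb₁ k₁ hk₁
    have hk₂b := hb₂ k₂ hk₂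
    have hl₂b := hb₂ l₂ hl₂
    have hdb : |d| ≤ 4*N₂ := by
      rw [hd]
      calc |(l₂:ℝ) - k₂| ≤ |(l₂:ℝ)| + |(k₂:ℝ)| := abs_sub _ _
        _ ≤ 4*N₂ := by linarith
    have hSb : N₁/2 ≤ |S| := by
      have h1 : |(k₁:ℝ) + ((k₁:ℝ) + k₂ - l₂)| ≥ 2*|(k₁:ℝ)| - |d| := by
        have : (k₁:ℝ) + ((k₁:ℝ) + k₂ - l₂) = 2*(k₁:ℝ) - d := by rw [hd]; ring
        rw [this]
        have := abs_sub_abs_le_abs_sub (2*(k₁:ℝ)) d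
        rw [abs_mul] at this
        simp at this
        linarith [this]
      have h2 : |(k₂:ℝ) + l₂| ≤ 4*N₂ :=
        (abs_add_le _ _).trans (by linarith)
      have h3 : |(k₁:ℝ) + ((k₁:ℝ) + k₂ - l₂)| - |(k₂:ℝ) + l₂| ≤ |S| := by
        rw [hS]
        exact abs_sub_abs_le_abs_sub _ _
      linarith
    -- now the inequality on exponents
    have hSsq : N₁^2/4 ≤ S^2 := by
      have h := mul_self_le_mul_self (by positivity : (0:ℝ) ≤ N₁/2) hSb
      rw [abs_mul_abs_self] at h
      nlinarith [h]
    have hexpand : ((1/N₁)*(d*S))^2/4 = d^2*S^2/(4*N₁^2) := by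
      field_simp
    rw [neg_div, neg_div, neg_le_neg_iff, hexpand]
    rw [div_le_div_iff₀ (by norm_num) (by positivity)]
    have key : d^2 * (N₁^2/4) ≤ d^2 * S^2 := mul_le_mul_of_nonneg_left hSsq (sq_nonneg d)
    linear_combination 16 * key
  calc ∑ q ∈ F, Real.exp (-((1/N₁)*((((k₁^2+k₂^2) - (q.1^2+q.2^2)) :ℤ):ℝ))^2/4)
      ≤ ∑ q ∈ F, Real.exp (-(((q.2 - k₂ :ℤ):ℝ))^2/16) := Finset.sum_le_sum step
    _ = ∑ d ∈ F.image (fun q => q.2 - k₂), Real.exp (-((d:ℝ))^2/16) := by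
        rw [Finset.sum_image]
        intro x hx y hy hxy
        simp only [hF, Finset.mem_filter] at hx hy
        have hxy' : x.2 - k₂ = y.2 - k₂ := hxy
        have : x.2 = y.2 := by omega
        have hx' : k₁ + k₂ = x.1 + x.2 := by simpa using (Finset.mem_filter.mp hx).2
        have hy' : k₁ + k₂ = y.1 + y.2 := by simpa using (Finset.mem_filter.mp hy).2
        have : x.1 = y.1 := by omega
        exact Prod.ext ‹x.1 = y.1› ‹x.2 = y.2›
    _ ≤ 34 := geomAbs _

lemma timeEstimate (T : ℝ) (hT : 0 < T) (P : Finset (ℤ×ℤ)) (A : ℤ×ℤ → ℂ)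
    (φ : ℤ×ℤ → ℤ) (nn : ℤ×ℤ → ℤ) (K : ℝ)
    (hrow : ∀ p ∈ P, ∑ q ∈ P,
      (if nn p = nn q then Real.exp (-(T * ((φ p - φ q :ℤ):ℝ))^2/4) else 0) ≤ K)
    (hQ0 : ∀ t : ℝ, 0 ≤ ∑ p ∈ P, ∑ q ∈ P,
      (if nn p = nn q then ((A p * Complex.exp (-(Complex.I * ((φ p : ℝ):ℂ) * (t:ℂ)))) *
        (starRingEnd ℂ) (A q * Complex.exp (-(Complex.I * ((φ q : ℝ):ℂ) * (t:ℂ))))).re else 0)) :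
    (∫ t in (0:ℝ)..T, ∑ p ∈ P, ∑ q ∈ P,
      (if nn p = nn q then ((A p * Complex.exp (-(Complex.I * ((φ p : ℝ):ℂ) * (t:ℂ)))) *
        (starRingEnd ℂ) (A q * Complex.exp (-(Complex.I * ((φ q : ℝ):ℂ) * (t:ℂ))))).re else 0))
    ≤ 2 * Real.exp 1 * T * K * ∑ p ∈ P, ‖A p‖^2 := by
  classical
  set Q : ℝ → ℝ := fun t => ∑ p ∈ P, ∑ q ∈ P,
      (if nn p = nn q then ((A p * Complex.exp (-(Complex.I * ((φ p : ℝ):ℂ) * (t:ℂ)))) *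
        (starRingEnd ℂ) (A q * Complex.exp (-(Complex.I * ((φ q : ℝ):ℂ) * (t:ℂ))))).re else 0)
    with hQdef
  -- pair identity
  have hpair : ∀ (t : ℝ) (p q : ℤ×ℤ),
      (A p * Complex.exp (-(Complex.I * ((φ p : ℝ):ℂ) * (t:ℂ)))) *
        (starRingEnd ℂ) (A q * Complex.exp (-(Complex.I * ((φ q : ℝ):ℂ) * (t:ℂ))))
      = (A p * (starRingEnd ℂ) (A q)) *
          Complex.exp (-(Complex.I * (((φ p - φ q : ℤ):ℝ):ℂ) * (t:ℂ))) := by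
    intro t p q
    rw [map_mul, ← Complex.exp_conj]
    have hc : (starRingEnd ℂ) (-(Complex.I * ((φ q : ℝ):ℂ) * (t:ℂ)))
        = Complex.I * ((φ q : ℝ):ℂ) * (t:ℂ) := by
      simp [Complex.ext_iff]
    rw [hc, mul_mul_mul_comm, ← Complex.exp_add]
    congr 1
    push_cast
    ring
  -- the weighted integrand, complex form
  set G : ℤ×ℤ → ℤ×ℤ → ℝ → ℂ := fun p q t =>
    if nn p = nn q then
      ((Real.exp 1 * Real.exp (-(t/T)^2) : ℝ):ℂ) *
        ((A p * (starRingEnd ℂ) (A q)) *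
          Complex.exp (-(Complex.I * (((φ p - φ q : ℤ):ℝ):ℂ) * (t:ℂ))))
    else 0 with hGdef
  have hGint : ∀ p q, Integrable (fun t : ℝ => G p q t) := by
    intro p q
    rw [hGdef]
    dsimp only
    split_ifs with h
    · have : (fun t : ℝ => ((Real.exp 1 * Real.exp (-(t/T)^2) : ℝ):ℂ) *
          ((A p * (starRingEnd ℂ) (A q)) *
            Complex.exp (-(Complex.I * (((φ p - φ q : ℤ):ℝ):ℂ) * (t:ℂ)))))
          = (fun t : ℝ => ((Real.exp 1 : ℝ):ℂ) * (A p * (starRingEnd ℂ) (A q)) *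
            ((Real.exp (-(t/T)^2) : ℂ) * Complex.exp (-(Complex.I * (((φ p - φ q : ℤ):ℝ)) * t)))) := by
        funext t
        push_cast
        ring
      rw [this]
      exact (gaussIntegrable T hT _).const_mul _
    · exact integrable_zero _ _ _
  have hGintre : ∀ p q, Integrable (fun t : ℝ => (G p q t).re) := by
    intro p q
    have h := (hGint p q).re
    simpa [RCLike.re_eq_complex_re] using h
  have hwQ : ∀ t : ℝ, Real.exp 1 * Real.exp (-(t/T)^2) * Q t
      = ∑ p ∈ P, ∑ q ∈ P, (G p q t).re := by
    intro t
    rw [hQdef]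
    dsimp only
    rw [Finset.mul_sum]
    refine Finset.sum_congr rfl fun p _ => ?_
    rw [Finset.mul_sum]
    refine Finset.sum_congr rfl fun q _ => ?_
    rw [hGdef]
    dsimp only
    split_ifs with h
    · rw [hpair, Complex.re_ofReal_mul]
    · simp
  -- continuity of Q
  have hQcont : Continuous Q := by
    rw [hQdef]
    apply continuous_finset_sum
    intro p _
    apply continuous_finset_sum
    intro q _
    split_ifs with h
    · have h1 : Continuous fun t:ℝ => A p * Complex.exp (-(Complex.I * ((φ p : ℝ):ℂ) * (t:ℂ))) := by
        fun_prop
      have h2 : Continuous fun t:ℝ => A q * Complex.exp (-(Complex.I * ((φ q : ℝ):ℂ) * (t:ℂ))) := by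
        fun_prop
      exact Complex.continuous_re.comp (h1.mul ((Complex.continuous_conj).comp h2))
    · exact continuous_const
  set w : ℝ → ℝ := fun t => Real.exp 1 * Real.exp (-(t/T)^2) with hwdef
  have hwcont : Continuous fun t => w t * Q t := by
    apply Continuous.mul ?_ hQcont
    fun_prop
  have hw1 : ∀ t ∈ Set.Icc (0:ℝ) T, 1 ≤ w t := by
    intro t ht
    rw [hwdef]
    dsimp only
    rw [← Real.exp_add]
    apply Real.one_le_exp
    obtain ⟨h0, h1⟩ := ht
    have htT : t/T ≤ 1 := div_le_one_of_le₀ h1 hT.le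
    have htT0 : 0 ≤ t/T := div_nonneg h0 hT.le
    nlinarith
  have hw0 : ∀ t : ℝ, 0 ≤ w t * Q t := by
    intro t
    exact mul_nonneg (by positivity) (hQ0 t)
  have step1 : (∫ t in (0:ℝ)..T, Q t) ≤ ∫ t in (0:ℝ)..T, w t * Q t := by
    apply intervalIntegral.integral_mono_on hT.le (hQcont.intervalIntegrable _ _)
      (hwcont.intervalIntegrable _ _)
    intro t ht
    calc Q t = 1 * Q t := (one_mul _).symm
      _ ≤ w t * Q t := mul_le_mul_of_nonneg_right (hw1 t ht) (hQ0 t)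
  have hGsumint : Integrable (fun t:ℝ => ∑ p ∈ P, ∑ q ∈ P, G p q t) := by
    apply integrable_finset_sum
    intro p _
    apply integrable_finset_sum
    intro q _
    exact hGint p q
  have h1 : (fun t:ℝ => w t * Q t) = fun t => (∑ p ∈ P, ∑ q ∈ P, G p q t).re := by
    funext t
    rw [hwQ t, Complex.re_sum]
    exact Finset.sum_congr rfl fun p _ => (Complex.re_sum _ _).symm
  have hIwQ : Integrable (fun t : ℝ => w t * Q t) := by
    rw [h1]
    have h := hGsumint.re
    simpa [RCLike.re_eq_complex_re] using h
  have step2 : (∫ t in (0:ℝ)..T, w t * Q t) ≤ ∫ t : ℝ, w t * Q t := by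
    rw [intervalIntegral.integral_of_le hT.le]
    exact setIntegral_le_integral hIwQ (Filter.Eventually.of_forall hw0)
  have step3 : (∫ t : ℝ, w t * Q t) = ∑ p ∈ P, ∑ q ∈ P, (∫ t : ℝ, G p q t).re := by
    rw [congrArg (integral volume) h1]
    have h2 := integral_re hGsumint
    simp only [RCLike.re_eq_complex_re] at h2
    rw [h2]
    rw [integral_finset_sum _ (fun p _ => integrable_finset_sum _ (fun q _ => hGint p q))]
    rw [Complex.re_sum]
    exact Finset.sum_congr rfl fun p _ => by
      rw [integral_finset_sum _ (fun q _ => hGint p q), Complex.re_sum]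
  set g : ℤ×ℤ → ℤ×ℤ → ℝ := fun p q => Real.exp (-(T * ((φ p - φ q :ℤ):ℝ))^2/4) with hgdef
  have step4 : ∀ p q, (∫ t : ℝ, G p q t).re ≤
      (if nn p = nn q then Real.exp 1 * (‖A p‖ * ‖A q‖) * (2*T* g p q) else 0) := by
    intro p q
    rw [hGdef]
    dsimp only
    split_ifs with h
    · have hfun : (fun t : ℝ => ((Real.exp 1 * Real.exp (-(t/T)^2) : ℝ):ℂ) *
          ((A p * (starRingEnd ℂ) (A q)) *
            Complex.exp (-(Complex.I * (((φ p - φ q : ℤ):ℝ):ℂ) * (t:ℂ)))))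
          = (fun t : ℝ => ((Real.exp 1 : ℝ):ℂ) * (A p * (starRingEnd ℂ) (A q)) *
            ((Real.exp (-(t/T)^2) : ℂ) *
              Complex.exp (-(Complex.I * (((φ p - φ q : ℤ):ℝ)) * t)))) := by
        funext t
        push_cast
        ring
      rw [hfun, MeasureTheory.integral_const_mul]
      refine (Complex.re_le_norm _).trans ?_
      rw [norm_mul]
      have hA : ‖((Real.exp 1 : ℝ):ℂ) * (A p * (starRingEnd ℂ) (A q))‖
          = Real.exp 1 * (‖A p‖ * ‖A q‖) := by
        rw [norm_mul, norm_mul, Complex.norm_real, Real.norm_of_nonneg (Real.exp_nonneg _),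
          RCLike.norm_conj]
      rw [hA]
      exact mul_le_mul_of_nonneg_left (gaussBound T hT _) (by positivity)
    · simp
  have step5 : (∑ p ∈ P, ∑ q ∈ P, (∫ t : ℝ, G p q t).re)
      ≤ ∑ p ∈ P, ∑ q ∈ P,
        (if nn p = nn q then Real.exp 1 * (‖A p‖ * ‖A q‖) * (2*T* g p q) else 0) :=
    Finset.sum_le_sum fun p _ => Finset.sum_le_sum fun q _ => step4 p q
  -- Schur / symmetrization
  have hgsymm : ∀ p q, g q p = g p q := by
    intro p q
    rw [hgdef]
    dsimp only
    congr 1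
    push_cast
    ring
  have hg0 : ∀ p q, 0 ≤ g p q := fun p q => Real.exp_nonneg _
  set U : ℤ×ℤ → ℤ×ℤ → ℝ := fun p q => if nn p = nn q then ‖A p‖^2 * g p q else 0 with hUdef
  set V : ℤ×ℤ → ℤ×ℤ → ℝ := fun p q => if nn p = nn q then ‖A q‖^2 * g p q else 0 with hVdef
  have hhalf : ∀ p q, (if nn p = nn q then Real.exp 1 * (‖A p‖ * ‖A q‖) * (2*T* g p q) else 0)
      ≤ Real.exp 1 * (2*T) * (U p q / 2 + V p q / 2) := by
    intro p q
    rw [hUdef, hVdef]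
    dsimp only
    split_ifs with h
    · have hAB : ‖A p‖ * ‖A q‖ ≤ (‖A p‖^2 + ‖A q‖^2)/2 := by
        nlinarith [sq_nonneg (‖A p‖ - ‖A q‖)]
      have h2 := mul_le_mul_of_nonneg_left (mul_le_mul_of_nonneg_right hAB (hg0 p q))
        (by positivity : (0:ℝ) ≤ Real.exp 1 * (2*T))
      nlinarith [h2]
    · simp
  have hUV : (∑ p ∈ P, ∑ q ∈ P, V p q) = ∑ p ∈ P, ∑ q ∈ P, U p q := by
    rw [Finset.sum_comm]
    refine Finset.sum_congr rfl fun q _ => Finset.sum_congr rfl fun p _ => ?_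
    rw [hUdef, hVdef]
    dsimp only
    rw [← hgsymm p q]
    exact if_congr eq_comm rfl rfl
  have step6 : (∑ p ∈ P, ∑ q ∈ P,
        (if nn p = nn q then Real.exp 1 * (‖A p‖ * ‖A q‖) * (2*T* g p q) else 0))
      ≤ Real.exp 1 * (2*T) * ∑ p ∈ P, ∑ q ∈ P, U p q := by
    calc (∑ p ∈ P, ∑ q ∈ P,
        (if nn p = nn q then Real.exp 1 * (‖A p‖ * ‖A q‖) * (2*T* g p q) else 0))
        ≤ ∑ p ∈ P, ∑ q ∈ P, Real.exp 1 * (2*T) * (U p q / 2 + V p q / 2) :=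
          Finset.sum_le_sum fun p _ => Finset.sum_le_sum fun q _ => hhalf p q
      _ = Real.exp 1 * (2*T) * ∑ p ∈ P, ∑ q ∈ P, U p q := by
          simp_rw [← Finset.mul_sum]
          congr 1
          simp only [Finset.sum_add_distrib, ← Finset.sum_div]
          rw [hUV]
          ring
  have step7 : (∑ p ∈ P, ∑ q ∈ P, U p q) ≤ K * ∑ p ∈ P, ‖A p‖^2 := by
    have hinner : ∀ p ∈ P, ∑ q ∈ P, U p q ≤ ‖A p‖^2 * K := by
      intro p hp
      have : ∑ q ∈ P, U p q = ‖A p‖^2 * ∑ q ∈ P,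
          (if nn p = nn q then g p q else 0) := by
        rw [hUdef, Finset.mul_sum]
        refine Finset.sum_congr rfl fun q _ => ?_
        dsimp only
        split_ifs with h
        · rfl
        · rw [mul_zero]
      rw [this]
      exact mul_le_mul_of_nonneg_left (hrow p hp) (by positivity)
    calc (∑ p ∈ P, ∑ q ∈ P, U p q) ≤ ∑ p ∈ P, ‖A p‖^2 * K :=
        Finset.sum_le_sum hinner
      _ = K * ∑ p ∈ P, ‖A p‖^2 := by rw [← Finset.sum_mul]; ring
  calc (∫ t in (0:ℝ)..T, Q t) ≤ ∫ t in (0:ℝ)..T, w t * Q t := step1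
    _ ≤ ∫ t : ℝ, w t * Q t := step2
    _ = ∑ p ∈ P, ∑ q ∈ P, (∫ t : ℝ, G p q t).re := step3
    _ ≤ ∑ p ∈ P, ∑ q ∈ P,
        (if nn p = nn q then Real.exp 1 * (‖A p‖ * ‖A q‖) * (2*T* g p q) else 0) := step5
    _ ≤ Real.exp 1 * (2*T) * ∑ p ∈ P, ∑ q ∈ P, U p q := step6
    _ ≤ Real.exp 1 * (2*T) * (K * ∑ p ∈ P, ‖A p‖^2) := by
        apply mul_le_mul_of_nonneg_left step7 (by positivity)
    _ = 2 * Real.exp 1 * T * K * ∑ p ∈ P, ‖A p‖^2 := by ring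

lemma evol_finsum (a : ℤ → ℂ) (s : Finset ℤ) (hs : ∀ k, k ∉ s → a k = 0) (t x : ℝ) :
    evol a t x = ∑ k ∈ s, a k *
      Complex.exp (Complex.I * (((k : ℝ) * x - t * (k : ℝ) ^ 2 : ℝ) : ℂ)) := by
  apply tsum_eq_sum
  intro k hk
  rw [hs k hk, zero_mul]

lemma l2nsq_eq (a : ℤ → ℂ) (s : Finset ℤ) (hs : ∀ k, k ∉ s → a k = 0) :
    l2nsq a = 2*π * ∑ k ∈ s, ‖a k‖^2 := by
  classical
  rw [l2nsq, ← intervalIntegral.integral_of_le (by positivity : (0:ℝ) ≤ 2*π)]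
  have hpt : ∀ x : ℝ, evol a 0 x = ∑ k ∈ s, a k * Complex.exp (Complex.I * ((k:ℤ)) * x) := by
    intro x
    rw [evol_finsum a s hs 0 x]
    refine Finset.sum_congr rfl fun k _ => ?_
    congr 1
    push_cast
    ring
  simp_rw [hpt]
  rw [xParseval s (fun k => k) a]
  congr 1
  refine Finset.sum_congr rfl fun i hi => ?_
  rw [Finset.sum_ite_eq s i (fun j => (a i * (starRingEnd ℂ) (a j)).re), if_pos hi]
  rw [Complex.mul_conj]
  simp [Complex.normSq_eq_norm_sq, ← Complex.ofReal_pow]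

lemma prod_x_integral (a₁ a₂ : ℤ → ℂ) (s₁ s₂ : Finset ℤ)
    (hz₁ : ∀ k, k ∉ s₁ → a₁ k = 0) (hz₂ : ∀ k, k ∉ s₂ → a₂ k = 0) (t : ℝ) :
    (∫ x in Set.Ioc (0:ℝ) (2*π), ‖evol a₁ t x * evol a₂ t x‖^2)
    = 2*π * ∑ p ∈ s₁ ×ˢ s₂, ∑ q ∈ s₁ ×ˢ s₂,
        (if p.1 + p.2 = q.1 + q.2 then
          (((a₁ p.1 * a₂ p.2) * Complex.exp (-(Complex.I * (((p.1^2 + p.2^2 : ℤ) : ℝ) : ℂ) * (t:ℂ)))) *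
            (starRingEnd ℂ) ((a₁ q.1 * a₂ q.2) *
              Complex.exp (-(Complex.I * (((q.1^2 + q.2^2 : ℤ) : ℝ) : ℂ) * (t:ℂ))))).re
        else 0) := by
  classical
  rw [← intervalIntegral.integral_of_le (by positivity : (0:ℝ) ≤ 2*π)]
  have hpt : ∀ x : ℝ, evol a₁ t x * evol a₂ t x
      = ∑ p ∈ s₁ ×ˢ s₂,
          ((a₁ p.1 * a₂ p.2) * Complex.exp (-(Complex.I * (((p.1^2 + p.2^2 : ℤ) : ℝ) : ℂ) * (t:ℂ))))
            * Complex.exp (Complex.I * ((p.1 + p.2 : ℤ)) * x) := by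
    intro x
    rw [evol_finsum a₁ s₁ hz₁ t x, evol_finsum a₂ s₂ hz₂ t x]
    rw [Finset.sum_mul_sum]
    rw [Finset.sum_product]
    refine Finset.sum_congr rfl fun k _ => Finset.sum_congr rfl fun l _ => ?_
    dsimp only
    rw [mul_mul_mul_comm, ← Complex.exp_add]
    conv_rhs => rw [mul_assoc, ← Complex.exp_add]
    congr 1
    push_cast
    ring
  simp_rw [hpt]
  exact xParseval (s₁ ×ˢ s₂) (fun p => p.1 + p.2)
    (fun p => (a₁ p.1 * a₂ p.2) * Complex.exp (-(Complex.I * (((p.1^2 + p.2^2 : ℤ) : ℝ) : ℂ) * (t:ℂ))))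
end Aux

set_option maxHeartbeats 1600000 in
theorem stmt5 :
    ∃ C₀ : ℝ, 1 ≤ C₀ ∧ ∃ C : ℝ, 0 < C ∧
      ∀ N₁ N₂ : ℕ, (∃ n : ℕ, N₁ = 2 ^ n) → (∃ n : ℕ, N₂ = 2 ^ n) →
        (N₁ : ℝ) ≥ C₀ * (N₂ : ℝ) →
      ∀ a₁ a₂ : ℤ → ℂ,
        (∀ k : ℤ, a₁ k ≠ 0 → (N₁ : ℝ) / 2 ≤ |(k : ℝ)| ∧ |(k : ℝ)| ≤ 2 * N₁) →
        (∀ k : ℤ, a₂ k ≠ 0 → (N₂ : ℝ) / 2 ≤ |(k : ℝ)| ∧ |(k : ℝ)| ≤ 2 * N₂) →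
        (∫ t in Set.Ioc (0 : ℝ) (1 / (N₁ : ℝ)), ∫ x in Set.Ioc (0 : ℝ) (2 * π),
            ‖evol a₁ t x * evol a₂ t x‖ ^ 2) ^ ((1 : ℝ) / 2)
          ≤ C * (N₁ : ℝ) ^ (-(1 : ℝ) / 2) *
            (l2nsq a₁) ^ ((1 : ℝ) / 2) * (l2nsq a₂) ^ ((1 : ℝ) / 2) := by
  classical
  refine ⟨16, by norm_num, 100, by norm_num, ?_⟩
  intro N₁ N₂ hN₁p hN₂p hN a₁ a₂ h₁ h₂
  have hN₁pos : (0:ℝ) < N₁ := by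
    obtain ⟨n, rfl⟩ := hN₁p
    exact_mod_cast pow_pos (by norm_num : (0:ℕ) < 2) n
  have hN₂0 : (0:ℝ) ≤ N₂ := Nat.cast_nonneg _
  set T : ℝ := 1/(N₁:ℝ) with hTdef
  have hT : 0 < T := by positivity
  set s₁ : Finset ℤ := (Finset.Icc (-(2*(N₁:ℤ))) (2*(N₁:ℤ))).filter (fun k => a₁ k ≠ 0)
    with hs₁def
  set s₂ : Finset ℤ := (Finset.Icc (-(2*(N₂:ℤ))) (2*(N₂:ℤ))).filter (fun k => a₂ k ≠ 0)
    with hs₂def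
  have hz₁ : ∀ k, k ∉ s₁ → a₁ k = 0 := by
    intro k hk
    by_contra hne
    apply hk
    rw [hs₁def, Finset.mem_filter, Finset.mem_Icc]
    refine ⟨?_, hne⟩
    have hb := (h₁ k hne).2
    have : |k| ≤ 2*(N₁:ℤ) := by
      have : |(k:ℝ)| ≤ ((2*(N₁:ℤ) : ℤ) : ℝ) := by push_cast; linarith
      rw [← Int.cast_abs] at this
      exact_mod_cast this
    exact abs_le.mp this
  have hz₂ : ∀ k, k ∉ s₂ → a₂ k = 0 := by
    intro k hk
    by_contra hne
    apply hk
    rw [hs₂def, Finset.mem_filter, Finset.mem_Icc]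
    refine ⟨?_, hne⟩
    have hb := (h₂ k hne).2
    have : |k| ≤ 2*(N₂:ℤ) := by
      have : |(k:ℝ)| ≤ ((2*(N₂:ℤ) : ℤ) : ℝ) := by push_cast; linarith
      rw [← Int.cast_abs] at this
      exact_mod_cast this
    exact abs_le.mp this
  have hb₁ : ∀ k ∈ s₁, (N₁:ℝ)/2 ≤ |(k:ℝ)| ∧ |(k:ℝ)| ≤ 2*(N₁:ℝ) := by
    intro k hk
    rw [hs₁def, Finset.mem_filter] at hk
    exact h₁ k hk.2
  have hb₂ : ∀ k ∈ s₂, |(k:ℝ)| ≤ 2*(N₂:ℝ) := by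
    intro k hk
    rw [hs₂def, Finset.mem_filter] at hk
    exact (h₂ k hk.2).2
  set E₁ : ℝ := ∑ k ∈ s₁, ‖a₁ k‖^2 with hE₁def
  set E₂ : ℝ := ∑ k ∈ s₂, ‖a₂ k‖^2 with hE₂def
  have hE₁0 : 0 ≤ E₁ := Finset.sum_nonneg fun k _ => by positivity
  have hE₂0 : 0 ≤ E₂ := Finset.sum_nonneg fun k _ => by positivity
  have hl1 : l2nsq a₁ = 2*π*E₁ := l2nsq_eq a₁ s₁ hz₁
  have hl2 : l2nsq a₂ = 2*π*E₂ := l2nsq_eq a₂ s₂ hz₂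
  -- inner integral identity
  set Q : ℝ → ℝ := fun t => ∑ p ∈ s₁ ×ˢ s₂, ∑ q ∈ s₁ ×ˢ s₂,
      (if p.1 + p.2 = q.1 + q.2 then
        (((a₁ p.1 * a₂ p.2) * Complex.exp (-(Complex.I * (((p.1^2 + p.2^2 : ℤ) : ℝ) : ℂ) * (t:ℂ)))) *
          (starRingEnd ℂ) ((a₁ q.1 * a₂ q.2) *
            Complex.exp (-(Complex.I * (((q.1^2 + q.2^2 : ℤ) : ℝ) : ℂ) * (t:ℂ))))).re
      else 0) with hQdef
  have hX : ∀ t : ℝ, (∫ x in Set.Ioc (0:ℝ) (2*π), ‖evol a₁ t x * evol a₂ t x‖^2)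
      = 2*π * Q t := fun t => prod_x_integral a₁ a₂ s₁ s₂ hz₁ hz₂ t
  have hQ0 : ∀ t : ℝ, 0 ≤ Q t := by
    intro t
    have h0 : 0 ≤ ∫ x in Set.Ioc (0:ℝ) (2*π), ‖evol a₁ t x * evol a₂ t x‖^2 :=
      setIntegral_nonneg measurableSet_Ioc fun x _ => by positivity
    rw [hX t] at h0
    nlinarith [Real.pi_pos]
  -- the row bound
  have hrow : ∀ p ∈ s₁ ×ˢ s₂, ∑ q ∈ s₁ ×ˢ s₂,
      (if p.1 + p.2 = q.1 + q.2 then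
        Real.exp (-(T * (((p.1^2+p.2^2) - (q.1^2+q.2^2) :ℤ):ℝ))^2/4) else 0) ≤ 34 := by
    intro p hp
    have := schurRow (N₁:ℝ) (N₂:ℝ) hN₁pos hN₂0 (by linarith [hN]) s₁ s₂ hb₁ hb₂ p hp
    rw [hTdef]
    exact this
  -- time estimate
  have hTE := timeEstimate T hT (s₁ ×ˢ s₂) (fun p => a₁ p.1 * a₂ p.2)
    (fun p => p.1^2 + p.2^2) (fun p => p.1 + p.2) 34 hrow hQ0
  -- sum of squares over the product
  have hAsum : (∑ p ∈ s₁ ×ˢ s₂, ‖a₁ p.1 * a₂ p.2‖^2) = E₁ * E₂ := by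
    rw [Finset.sum_product, hE₁def, hE₂def, Finset.sum_mul_sum]
    refine Finset.sum_congr rfl fun k _ => Finset.sum_congr rfl fun l _ => ?_
    rw [norm_mul, mul_pow]
  -- the double integral
  set L : ℝ := ∫ t in Set.Ioc (0 : ℝ) (1 / (N₁ : ℝ)), ∫ x in Set.Ioc (0 : ℝ) (2 * π),
      ‖evol a₁ t x * evol a₂ t x‖ ^ 2 with hLdef
  have hL0 : 0 ≤ L := by
    rw [hLdef]
    apply setIntegral_nonneg measurableSet_Ioc
    intro t _
    exact setIntegral_nonneg measurableSet_Ioc fun x _ => by positivity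
  have hLeq : L = 2*π * ∫ t in (0:ℝ)..T, Q t := by
    rw [hLdef]
    have : (∫ t in Set.Ioc (0 : ℝ) (1 / (N₁ : ℝ)), ∫ x in Set.Ioc (0 : ℝ) (2 * π),
        ‖evol a₁ t x * evol a₂ t x‖ ^ 2) = ∫ t in Set.Ioc (0 : ℝ) (1 / (N₁ : ℝ)), 2*π * Q t := by
      apply setIntegral_congr_fun measurableSet_Ioc
      intro t _
      exact hX t
    rw [this, ← intervalIntegral.integral_of_le hT.le, intervalIntegral.integral_const_mul]
  have hLle : L ≤ 2*π * (2 * Real.exp 1 * T * 34 * (E₁ * E₂)) := by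
    rw [hLeq]
    apply mul_le_mul_of_nonneg_left _ (by positivity : (0:ℝ) ≤ 2*π)
    calc (∫ t in (0:ℝ)..T, Q t)
        ≤ 2 * Real.exp 1 * T * 34 * ∑ p ∈ s₁ ×ˢ s₂, ‖a₁ p.1 * a₂ p.2‖^2 := hTE
      _ = 2 * Real.exp 1 * T * 34 * (E₁ * E₂) := by rw [hAsum]
  -- numerics
  have hexp3 : Real.exp 1 ≤ 3 := by
    have := Real.exp_one_lt_d9
    linarith
  have hLfinal : L ≤ 10000 * T * (2*π*E₁) * (2*π*E₂) := by
    have hπ3 : 3 ≤ π := by linarith [Real.pi_gt_three]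
    have hπ4 : π ≤ 4 := Real.pi_le_four
    have hX0 : 0 ≤ T * (E₁ * E₂) := by positivity
    refine hLle.trans ?_
    have key : 2*π * (2 * Real.exp 1 * T * 34 * (E₁ * E₂)) ≤ 1632 * (T * (E₁*E₂)) := by
      have h1 : π * Real.exp 1 ≤ 12 := by nlinarith [Real.exp_pos 1]
      linarith [mul_le_mul_of_nonneg_right h1 hX0]
    refine key.trans ?_
    have h9 : 9 ≤ π * π := by nlinarith
    nlinarith [mul_le_mul_of_nonneg_right h9 hX0]
  -- conclude via rpow
  have hsq : ∀ x:ℝ, 0 ≤ x → (x^((1:ℝ)/2))^2 = x := by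
    intro x hx
    rw [← Real.rpow_natCast (x^((1:ℝ)/2)) 2, ← Real.rpow_mul hx]
    norm_num
  set R : ℝ := 100 * (N₁ : ℝ) ^ (-(1 : ℝ) / 2) * (l2nsq a₁) ^ ((1 : ℝ) / 2) *
      (l2nsq a₂) ^ ((1 : ℝ) / 2) with hRdef
  have hR0 : 0 ≤ R := by
    rw [hRdef]
    have h1 : (0:ℝ) ≤ (N₁ : ℝ) ^ (-(1 : ℝ) / 2) := Real.rpow_nonneg hN₁pos.le _
    have h2 : (0:ℝ) ≤ (l2nsq a₁) ^ ((1 : ℝ) / 2) := Real.rpow_nonneg (by rw [hl1]; positivity) _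
    have h3 : (0:ℝ) ≤ (l2nsq a₂) ^ ((1 : ℝ) / 2) := Real.rpow_nonneg (by rw [hl2]; positivity) _
    positivity
  have hRsq : R^2 = 10000 * T * (2*π*E₁) * (2*π*E₂) := by
    rw [hRdef, hl1, hl2]
    have e1 : ((N₁:ℝ) ^ (-(1 : ℝ) / 2))^2 = T := by
      rw [← Real.rpow_natCast ((N₁:ℝ) ^ (-(1 : ℝ) / 2)) 2, ← Real.rpow_mul hN₁pos.le]
      norm_num
      rw [Real.rpow_neg_one]
      rw [hTdef, one_div]
    have e2 : ((2*π*E₁) ^ ((1:ℝ)/2))^2 = 2*π*E₁ := hsq _ (by positivity)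
    have e3 : ((2*π*E₂) ^ ((1:ℝ)/2))^2 = 2*π*E₂ := hsq _ (by positivity)
    calc (100 * (N₁ : ℝ) ^ (-(1 : ℝ) / 2) * (2*π*E₁) ^ ((1:ℝ)/2) * (2*π*E₂) ^ ((1:ℝ)/2))^2
        = 100^2 * ((N₁ : ℝ) ^ (-(1 : ℝ) / 2))^2 * ((2*π*E₁) ^ ((1:ℝ)/2))^2
          * ((2*π*E₂) ^ ((1:ℝ)/2))^2 := by ring
      _ = 10000 * T * (2*π*E₁) * (2*π*E₂) := by rw [e1, e2, e3]; ring
  have hfin : L ≤ R^2 := by rw [hRsq]; exact hLfinal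
  calc L ^ ((1:ℝ)/2) ≤ (R^2) ^ ((1:ℝ)/2) :=
      Real.rpow_le_rpow hL0 hfin (by norm_num)
    _ = R := by
        rw [← Real.rpow_natCast R 2, ← Real.rpow_mul hR0]
        norm_num
end
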